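/- arXiv:1810.12688 — 3 statements merged into one kernel-verified Lean document; each statement's English description precedes it below -/
import Mathlib

section
/- Let A : ℝⁿ \ {0} → ℝⁿ be a C¹ vector field such that for all ξ ≠ 0 and all v ∈ ℝⁿ one has ⟨DA(ξ) v, v⟩ ≥ C |ξ|^{p-2} |v|² with p > 1 and C > 0. Then for all x, y ∈ ℝⁿ with x ≠ 0, y ≠ 0 and such that the segment [x,y] avoids the origin, ⟨A(x) - A(y), x - y⟩ ≥ C' (|x| + |y|)^{p-2} |x - y|² for a constant C' > 0 depending only on C and p. -/
open Real Set

set_option maxHeartbeats 1000000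


/-- Monotonicity of a vector field from pointwise ellipticity: if
`⟨DA(ξ)v, v⟩ ≥ C |ξ|^{p-2} |v|²` away from the origin, then
`⟨A(x) - A(y), x - y⟩ ≥ C' (|x| + |y|)^{p-2} |x - y|²` whenever the segment
`[x,y]` avoids the origin, with `C'` depending only on `C` and `p`. -/
theorem monotonicity_from_ellipticity {n : ℕ} (p C : ℝ)
    (hp : 1 < p) (hC : 0 < C)
    (A : EuclideanSpace ℝ (Fin n) → EuclideanSpace ℝ (Fin n))
    (hA : ContDiffOn ℝ 1 A {(0 : EuclideanSpace ℝ (Fin n))}ᶜ)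
    (hAdiff : ∀ ξ : EuclideanSpace ℝ (Fin n), ξ ≠ 0 → DifferentiableAt ℝ A ξ)
    (hell : ∀ ξ : EuclideanSpace ℝ (Fin n), ξ ≠ 0 →
      ∀ v : EuclideanSpace ℝ (Fin n),
        C * ‖ξ‖ ^ (p - 2) * ‖v‖ ^ 2 ≤ (inner ℝ (fderiv ℝ A ξ v) v : ℝ)) :
    ∃ C' : ℝ, 0 < C' ∧ ∀ x y : EuclideanSpace ℝ (Fin n),
      x ≠ 0 → y ≠ 0 → (0 : EuclideanSpace ℝ (Fin n)) ∉ segment ℝ x y →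
      C' * (‖x‖ + ‖y‖) ^ (p - 2) * ‖x - y‖ ^ 2 ≤
        (inner ℝ (A x - A y) (x - y) : ℝ) := by
  set c : ℝ := min ((4:ℝ) ^ (2 - p)) 1 with hcdef
  have hc0 : 0 < c := lt_min (Real.rpow_pos_of_pos (by norm_num) _) one_pos
  have hc1 : c ≤ 1 := min_le_right _ _
  refine ⟨C * c / 4, by positivity, ?_⟩
  have key : ∀ x y : EuclideanSpace ℝ (Fin n),
      x ≠ 0 → y ≠ 0 → (0 : EuclideanSpace ℝ (Fin n)) ∉ segment ℝ x y → ‖y‖ ≤ ‖x‖ →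
      C * c / 4 * (‖x‖ + ‖y‖) ^ (p - 2) * ‖x - y‖ ^ 2 ≤
        (inner ℝ (A x - A y) (x - y) : ℝ) := by
    intro x y hx hy hseg hyx
    set v := x - y with hv
    set s := ‖x‖ + ‖y‖ with hs
    have hs0 : 0 < s := by
      have h1 : 0 < ‖x‖ := norm_pos_iff.mpr hx
      have h2 : 0 ≤ ‖y‖ := norm_nonneg y
      rw [hs]; linarith
    have hvs : ‖v‖ ≤ s := norm_sub_le _ _
    set γ : ℝ → EuclideanSpace ℝ (Fin n) := fun t => y + t • v with hγ
    have hγ0 : γ 0 = y := by simp [hγ]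
    have hγ1 : γ 1 = x := by simp [hγ, hv]
    have hmem : ∀ t ∈ Icc (0:ℝ) 1, γ t ∈ segment ℝ x y := by
      intro t ht
      exact ⟨t, 1 - t, ht.1, by linarith [ht.2], by ring, by rw [hγ, hv]; module⟩
    have hne : ∀ t ∈ Icc (0:ℝ) 1, γ t ≠ 0 := by
      intro t ht h0
      exact hseg (h0 ▸ hmem t ht)
    set g : ℝ → ℝ := fun t => (inner ℝ (A (γ t)) v : ℝ) with hg
    have hderiv : ∀ t ∈ Icc (0:ℝ) 1,
        HasDerivAt g ((inner ℝ (fderiv ℝ A (γ t) v) v : ℝ)) t := by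
      intro t ht
      have hγd : HasDerivAt γ v t := by
        have h1 : HasDerivAt (fun t : ℝ => t • v) ((1:ℝ) • v) t :=
          (hasDerivAt_id t).smul_const v
        simpa [hγ] using h1.const_add y
      have hAc : HasDerivAt (fun t => A (γ t)) (fderiv ℝ A (γ t) v) t :=
        ((hAdiff _ (hne t ht)).hasFDerivAt).comp_hasDerivAt t hγd
      have h2 := hAc.inner ℝ (hasDerivAt_const t v)
      simpa [hg] using h2
    have hcont : ContinuousOn g (Icc (0:ℝ) 1) := fun t ht =>
      (hderiv t ht).continuousAt.continuousWithinAt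
    have hderiv' : ∀ t ∈ Icc (0:ℝ) 1,
        deriv g t = (inner ℝ (fderiv ℝ A (γ t) v) v : ℝ) := fun t ht =>
      (hderiv t ht).deriv
    have hdiff : DifferentiableOn ℝ g (interior (Icc (0:ℝ) 1)) := fun t ht =>
      (hderiv t (interior_subset ht)).differentiableAt.differentiableWithinAt
    have hIoo : interior (Icc (0:ℝ) 1) = Ioo 0 1 := interior_Icc
    -- norm bounds on γ
    have hupper : ∀ t ∈ Icc (0:ℝ) 1, ‖γ t‖ ≤ s := by
      intro t ht
      have hrepr : γ t = (1 - t) • y + t • x := by rw [hγ, hv]; module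
      rw [hrepr, hs]
      have h3 := norm_add_le ((1 - t) • y) (t • x)
      rw [norm_smul, norm_smul, Real.norm_eq_abs, Real.norm_eq_abs,
        abs_of_nonneg (by linarith [ht.2] : (0:ℝ) ≤ 1 - t), abs_of_nonneg ht.1] at h3
      nlinarith [norm_nonneg x, norm_nonneg y, ht.1, ht.2]
    have hlow : ∀ t ∈ Icc (3/4:ℝ) 1, s / 4 ≤ ‖γ t‖ := by
      intro t ht
      have hrepr : γ t = x - (1 - t) • v := by rw [hγ, hv]; module
      have h1 : ‖x‖ - ‖(1 - t) • v‖ ≤ ‖γ t‖ := hrepr ▸ norm_sub_norm_le x ((1 - t) • v)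
      have h2 : ‖(1 - t) • v‖ = (1 - t) * ‖v‖ := by
        rw [norm_smul, Real.norm_eq_abs, abs_of_nonneg (by linarith [ht.2])]
      nlinarith [norm_nonneg v,
        mul_nonneg (show (0:ℝ) ≤ 1/4 - (1 - t) by linarith [ht.1]) (norm_nonneg v)]
    have hsub : Icc (3/4:ℝ) 1 ⊆ Icc (0:ℝ) 1 := Icc_subset_Icc (by norm_num) le_rfl
    -- rpow lower bound on [3/4,1]
    have hrp : ∀ t ∈ Icc (3/4:ℝ) 1, c * s ^ (p - 2) ≤ ‖γ t‖ ^ (p - 2) := by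
      intro t ht
      have hγpos : 0 < ‖γ t‖ := norm_pos_iff.mpr (hne t (hsub ht))
      rcases le_total 2 p with h2p | h2p
      · have hstep : (s / 4) ^ (p - 2) ≤ ‖γ t‖ ^ (p - 2) :=
          Real.rpow_le_rpow (by positivity) (hlow t ht) (by linarith)
        refine le_trans ?_ hstep
        have h4 : (s / 4) ^ (p - 2) = (4:ℝ) ^ (2 - p) * s ^ (p - 2) := by
          rw [Real.div_rpow hs0.le (by norm_num : (0:ℝ) ≤ 4),
            show (2 - p) = -(p - 2) by ring, Real.rpow_neg (by norm_num : (0:ℝ) ≤ 4)]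
          ring
        rw [h4]
        exact mul_le_mul_of_nonneg_right (min_le_left _ _) (Real.rpow_nonneg hs0.le _)
      · have hstep : s ^ (p - 2) ≤ ‖γ t‖ ^ (p - 2) :=
          Real.rpow_le_rpow_of_nonpos hγpos (hupper t (hsub ht)) (by linarith)
        refine le_trans ?_ hstep
        nlinarith [Real.rpow_nonneg hs0.le (p - 2)]
    -- derivative lower bounds
    have hd0 : ∀ t ∈ interior (Icc (0:ℝ) 1), (0:ℝ) ≤ deriv g t := by
      intro t ht
      rw [hIoo] at ht
      have htI : t ∈ Icc (0:ℝ) 1 := Ioo_subset_Icc_self ht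
      rw [hderiv' t htI]
      refine le_trans ?_ (hell (γ t) (hne t htI) v)
      positivity
    have hd1 : ∀ t ∈ interior (Icc (3/4:ℝ) 1),
        C * (c * s ^ (p - 2)) * ‖v‖ ^ 2 ≤ deriv g t := by
      intro t ht
      rw [interior_Icc] at ht
      have htI : t ∈ Icc (3/4:ℝ) 1 := Ioo_subset_Icc_self ht
      rw [hderiv' t (hsub htI)]
      refine le_trans ?_ (hell (γ t) (hne t (hsub htI)) v)
      exact mul_le_mul_of_nonneg_right
        (mul_le_mul_of_nonneg_left (hrp t htI) hC.le) (sq_nonneg _)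
    -- mean value inequalities
    have hmv0 : (0:ℝ) * (3/4 - 0) ≤ g (3/4) - g 0 :=
      (convex_Icc (0:ℝ) 1).mul_sub_le_image_sub_of_le_deriv hcont hdiff hd0
        0 (by norm_num) (3/4) (by norm_num) (by norm_num)
    have hmv1 : C * (c * s ^ (p - 2)) * ‖v‖ ^ 2 * (1 - 3/4) ≤ g 1 - g (3/4) :=
      (convex_Icc (3/4:ℝ) 1).mul_sub_le_image_sub_of_le_deriv (hcont.mono hsub)
        (hdiff.mono (by rw [hIoo, interior_Icc]; exact Ioo_subset_Ioo (by norm_num) le_rfl))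
        hd1 (3/4) (by norm_num) 1 (by norm_num) (by norm_num)
    have hfin : (inner ℝ (A x - A y) v : ℝ) = g 1 - g 0 := by
      simp only [hg, hγ1, hγ0, inner_sub_left]
    rw [hfin]
    have heq : C * c / 4 * s ^ (p - 2) * ‖v‖ ^ 2
        = C * (c * s ^ (p - 2)) * ‖v‖ ^ 2 * (1 - 3/4) := by ring
    linarith [hmv0, hmv1]
  intro x y hx hy hseg
  rcases le_total ‖y‖ ‖x‖ with h | h
  · exact key x y hx hy hseg h
  · have h1 := key y x hy hx (by rwa [segment_symm]) h
    have h2 : (inner ℝ (A y - A x) (y - x) : ℝ) = (inner ℝ (A x - A y) (x - y) : ℝ) := by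
      rw [← neg_sub (A x) (A y), ← neg_sub x y, inner_neg_neg]
    rw [h2, norm_sub_rev y x, add_comm ‖y‖ ‖x‖] at h1
    exact h1
end

section
/- Sobolev regularity via Hölder interpolation, case p ≥ 3: let Ω ⊂ ℝⁿ be bounded, k ∈ [0,1], p ≥ 3, and u measurable with weak second derivatives such that (a) ∫_Ω (k+|∇u|)^{p-2-β} |D²u|² dx ≤ C₁ for every β ∈ [0,1), and (b) ∫_Ω (k+|∇u|)^{-t} dx ≤ C₂ for every t ∈ [0, p-1). Then for every q < (p-1)/(p-2), D²u ∈ L^q(Ω), with the bound ∫_Ω |D²u|^q ≤ C₁^{q/2} C₂^{(2-q)/2} obtained by Hölder's inequality with exponents 2/q and 2/(2-q) applied to |D²u|^q (k+|∇u|)^{(p-2-β)q/2} · (k+|∇u|)^{-(p-2-β)q/2}, choosing β < 1 with (p-2-β) q/(2-q) < p-1. -/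
open MeasureTheory ENNReal

/-- Sobolev regularity via Hölder interpolation for `p ≥ 3`: if the weighted
Hessian estimate holds with constant `C₁` for every `β ∈ [0,1)` and the
inverse-weight estimate holds with constant `C₂` for every `t ∈ [0, p-1)`,
then for every `q` with `1 < q < (p-1)/(p-2)` the Hessian is in `L^q(Ω)`,
with the bound `∫_Ω |D²u|^q ≤ C₁^{q/2} C₂^{(2-q)/2}`. -/
theorem sobolev_regularity_p_ge_three {n : ℕ} (p k C₁ C₂ : ℝ)
    (hp : 3 ≤ p) (hk : k ∈ Set.Icc (0:ℝ) 1) (hC₁ : 0 ≤ C₁) (hC₂ : 0 ≤ C₂)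
    (Ω : Set (EuclideanSpace ℝ (Fin n)))
    (hΩopen : IsOpen Ω) (hΩbdd : Bornology.IsBounded Ω)
    (u : EuclideanSpace ℝ (Fin n) → ℝ)
    (D2u : EuclideanSpace ℝ (Fin n) →
      EuclideanSpace ℝ (Fin n) →L[ℝ] EuclideanSpace ℝ (Fin n))
    (hD2u : ∀ x ∈ Ω, D2u x = fderiv ℝ (gradient u) x)
    (hhess : ∀ β : ℝ, β ∈ Set.Ico (0:ℝ) 1 →
      (∫⁻ x in Ω, ENNReal.ofReal
        ((k + ‖gradient u x‖) ^ (p - 2 - β) * ‖D2u x‖ ^ 2)) ≤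
        ENNReal.ofReal C₁)
    (hweight : ∀ t : ℝ, t ∈ Set.Ico (0:ℝ) (p - 1) →
      (∫⁻ x in Ω,
        (ENNReal.ofReal (k + ‖gradient u x‖)) ^ (-t : ℝ)) ≤
        ENNReal.ofReal C₂) :
    ∀ q : ℝ, 1 < q → q < (p - 1) / (p - 2) →
      (∫⁻ x in Ω, ENNReal.ofReal (‖D2u x‖ ^ q)) ≤
        ENNReal.ofReal (C₁ ^ (q / 2) * C₂ ^ ((2 - q) / 2)) := by
  obtain ⟨hk0, hk1⟩ := hk
  intro q hq1 hq2
  have hp2 : (0:ℝ) < p - 2 := by linarith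
  have hq0 : (0:ℝ) < q := by linarith
  have hqp : q * (p - 2) < p - 1 := (lt_div_iff₀ hp2).mp hq2
  have hq2' : q < 2 := by nlinarith
  have h2q : (0:ℝ) < 2 - q := by linarith
  -- choice of β
  set L : ℝ := p - 2 - (p - 1) * (2 - q) / q with hLdef
  clear_value L
  have hL1 : L < 1 := by
    rw [hLdef, sub_lt_iff_lt_add, ← sub_lt_iff_lt_add', lt_div_iff₀ hq0]
    nlinarith
  set β : ℝ := max ((L + 1) / 2) 0 with hβdef
  have hβ0 : 0 ≤ β := le_max_right _ _
  have hβ1 : β < 1 := max_lt (by linarith) one_pos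
  have hLβ : L < β := lt_of_lt_of_le (by linarith) (le_max_left _ _)
  clear_value β
  set s : ℝ := p - 2 - β with hsdef
  clear_value s
  have hs0 : 0 < s := by rw [hsdef]; linarith
  set t : ℝ := s * q / (2 - q) with htdef
  clear_value t
  have ht0 : 0 < t := by rw [htdef]; positivity
  have ht1 : t < p - 1 := by
    rw [htdef, div_lt_iff₀ h2q]
    have hss : s < (p - 1) * (2 - q) / q := by rw [hsdef]; linarith [hLβ, hLdef]
    calc s * q < ((p - 1) * (2 - q) / q) * q := mul_lt_mul_of_pos_right hss hq0
      _ = (p - 1) * (2 - q) := by field_simp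
  have hts : t * ((2 - q) / 2) = s * q / 2 := by
    rw [htdef]; field_simp
  -- measurability
  have hΩm : MeasurableSet Ω := hΩopen.measurableSet
  set W : EuclideanSpace ℝ (Fin n) → ℝ := fun x => k + ‖gradient u x‖ with hWdef
  have hW0 : ∀ x, 0 ≤ W x := fun x => add_nonneg hk0 (norm_nonneg _)
  have hWm : Measurable W := by
    have h1 : Measurable (fderiv ℝ u) := measurable_fderiv ℝ u
    have h2 : Measurable (gradient u) :=
      ((InnerProductSpace.toDual ℝ
        (EuclideanSpace ℝ (Fin n))).symm.continuous.measurable).comp h1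
    exact measurable_const.add h2.norm
  have hHm : Measurable (fderiv ℝ (gradient u)) := measurable_fderiv ℝ _
  have hD2ae : (fun x => ‖D2u x‖) =ᵐ[volume.restrict Ω]
      (fun x => ‖fderiv ℝ (gradient u) x‖) := by
    filter_upwards [ae_restrict_mem hΩm] with x hx
    rw [hD2u x hx]
  have hD2meas : AEMeasurable (fun x => ‖D2u x‖) (volume.restrict Ω) :=
    ⟨fun x => ‖fderiv ℝ (gradient u) x‖, hHm.norm, hD2ae⟩
  -- the two factors
  set A : EuclideanSpace ℝ (Fin n) → ℝ≥0∞ :=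
    fun x => ENNReal.ofReal (W x ^ s * ‖D2u x‖ ^ 2) with hAdef
  set B : EuclideanSpace ℝ (Fin n) → ℝ≥0∞ :=
    fun x => (ENNReal.ofReal (W x)) ^ (-t) with hBdef
  have hAmeas : AEMeasurable A (volume.restrict Ω) :=
    ((hWm.pow measurable_const).aemeasurable.mul
      (hD2meas.pow aemeasurable_const)).ennreal_ofReal
  have hBmeas : Measurable B := (hWm.ennreal_ofReal).pow measurable_const
  have hAint : ∫⁻ x in Ω, A x ≤ ENNReal.ofReal C₁ := by
    simp only [hAdef, hWdef, hsdef]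
    exact hhess β ⟨hβ0, hβ1⟩
  have hBint : ∫⁻ x in Ω, B x ≤ ENNReal.ofReal C₂ := by
    simp only [hBdef, hWdef]
    exact hweight t ⟨ht0.le, ht1⟩
  -- a.e. positivity of the weight
  have hWpos : ∀ᵐ x ∂(volume.restrict Ω), 0 < W x := by
    have hfin : ∫⁻ x in Ω, B x ≠ ⊤ :=
      (lt_of_le_of_lt hBint ENNReal.ofReal_lt_top).ne
    filter_upwards [ae_lt_top hBmeas hfin] with x hx
    rcases (hW0 x).lt_or_eq with h | h
    · exact h
    · exfalso
      rw [hBdef] at hx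
      simp only [← h, ENNReal.ofReal_zero] at hx
      rw [ENNReal.zero_rpow_of_neg (by linarith)] at hx
      exact (lt_irrefl _ hx)
  -- conjugate exponents
  have hconj : (2 / q).HolderConjugate (2 / (2 - q)) := by
    rw [Real.holderConjugate_iff]
    constructor
    · rw [lt_div_iff₀ hq0]; linarith
    · field_simp; ring
  set F : EuclideanSpace ℝ (Fin n) → ℝ≥0∞ := fun x => A x ^ (q / 2) with hFdef
  set G : EuclideanSpace ℝ (Fin n) → ℝ≥0∞ := fun x => B x ^ ((2 - q) / 2) with hGdef
  have hFmeas : AEMeasurable F (volume.restrict Ω) := hAmeas.pow aemeasurable_const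
  have hGmeas : AEMeasurable G (volume.restrict Ω) :=
    ((hBmeas.pow measurable_const).aemeasurable)
  -- pointwise identity a.e.
  have hpoint : (fun x => ENNReal.ofReal (‖D2u x‖ ^ q)) =ᵐ[volume.restrict Ω]
      fun x => F x * G x := by
    filter_upwards [hWpos] with x hx
    have hD0 : (0:ℝ) ≤ ‖D2u x‖ := norm_nonneg _
    have hF : F x = ENNReal.ofReal (W x ^ (s * q / 2) * ‖D2u x‖ ^ q) := by
      simp only [hFdef, hAdef]
      rw [ENNReal.ofReal_rpow_of_nonneg (by positivity) (by positivity)]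
      congr 1
      rw [Real.mul_rpow (by positivity) (by positivity),
        ← Real.rpow_natCast (‖D2u x‖) 2, ← Real.rpow_mul hD0, ← Real.rpow_mul (hW0 x),
        show s * (q / 2) = s * q / 2 by ring,
        show ((2 : ℕ) : ℝ) * (q / 2) = q by push_cast; ring]
    have hG : G x = ENNReal.ofReal (W x ^ (-(s * q / 2))) := by
      simp only [hGdef, hBdef]
      rw [← ENNReal.rpow_mul, ENNReal.ofReal_rpow_of_pos hx]
      congr 1
      rw [show (-t) * ((2 - q) / 2) = -(t * ((2 - q) / 2)) by ring, hts]
    rw [hF, hG, ← ENNReal.ofReal_mul (by positivity)]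
    congr 1
    rw [mul_comm (W x ^ (s * q / 2)) _, mul_assoc, ← Real.rpow_add hx,
      show s * q / 2 + -(s * q / 2) = 0 by ring, Real.rpow_zero, mul_one]
  rw [lintegral_congr_ae hpoint]
  have hholder := ENNReal.lintegral_mul_le_Lp_mul_Lq (volume.restrict Ω) hconj hFmeas hGmeas
  simp only [Pi.mul_apply] at hholder
  have hFq : ∀ x, F x ^ (2 / q) = A x := by
    intro x
    rw [hFdef, ← ENNReal.rpow_mul,
      show q / 2 * (2 / q) = 1 by field_simp, ENNReal.rpow_one]
  have hGq : ∀ x, G x ^ (2 / (2 - q)) = B x := by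
    intro x
    rw [hGdef, ← ENNReal.rpow_mul,
      show (2 - q) / 2 * (2 / (2 - q)) = 1 by field_simp, ENNReal.rpow_one]
  simp only [hFq, hGq] at hholder
  refine le_trans hholder ?_
  rw [show (1 : ℝ) / (2 / q) = q / 2 by field_simp,
    show (1 : ℝ) / (2 / (2 - q)) = (2 - q) / 2 by field_simp]
  calc (∫⁻ x in Ω, A x) ^ (q / 2) * (∫⁻ x in Ω, B x) ^ ((2 - q) / 2)
      ≤ (ENNReal.ofReal C₁) ^ (q / 2) * (ENNReal.ofReal C₂) ^ ((2 - q) / 2) :=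
        mul_le_mul' (ENNReal.rpow_le_rpow hAint (by positivity))
          (ENNReal.rpow_le_rpow hBint (by positivity))
    _ = ENNReal.ofReal (C₁ ^ (q / 2) * C₂ ^ ((2 - q) / 2)) := by
        rw [ENNReal.ofReal_rpow_of_nonneg hC₁ (by positivity),
          ENNReal.ofReal_rpow_of_nonneg hC₂ (by positivity),
          ← ENNReal.ofReal_mul (by positivity)]
end

section
/- Structural ellipticity bound: under assumptions (i)–(vi), there exist constants C̄₁, C̄₂ > 0 such that for every ξ ∈ ℝⁿ \ {0} and every v ∈ ℝⁿ, ⟨[B''(H(ξ)) ∇H(ξ) ⊗ ∇H(ξ) + B'(H(ξ)) D²H(ξ)] v, v⟩ ≥ C̄₁ (k+|ξ|)^{p-2} |v|², and the matrix norm satisfies |B''(H(ξ)) ∇H(ξ) ⊗ ∇H(ξ) + B'(H(ξ)) D²H(ξ)| ≤ C̄₂ (k+|ξ|)^{p-2}. -/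
open InnerProductSpace


lemma rpow_sandwich {c C k r h e : ℝ} (hc : 0 < c) (hc1 : c ≤ 1) (hC1 : 1 ≤ C)
    (hk : 0 ≤ k) (hr : 0 < r) (h1 : c * r ≤ h) (h2 : h ≤ C * r) :
    min (c ^ e) (C ^ e) * (k + r) ^ e ≤ (k + h) ^ e ∧
    (k + h) ^ e ≤ max (c ^ e) (C ^ e) * (k + r) ^ e := by
  have hkr : 0 < k + r := by linarith
  have hlow : c * (k + r) ≤ k + h := by nlinarith
  have hhigh : k + h ≤ C * (k + r) := by nlinarith
  have hpos : 0 < c * (k + r) := by positivity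
  have hkh : 0 < k + h := lt_of_lt_of_le hpos hlow
  have hCpos : (0:ℝ) < C := lt_of_lt_of_le one_pos hC1
  rcases le_or_gt 0 e with he | he
  · constructor
    · calc min (c ^ e) (C ^ e) * (k + r) ^ e ≤ c ^ e * (k + r) ^ e :=
            mul_le_mul_of_nonneg_right (min_le_left _ _) (Real.rpow_nonneg hkr.le _)
        _ = (c * (k + r)) ^ e := (Real.mul_rpow hc.le hkr.le).symm
        _ ≤ (k + h) ^ e := Real.rpow_le_rpow hpos.le hlow he
    · calc (k + h) ^ e ≤ (C * (k + r)) ^ e := Real.rpow_le_rpow hkh.le hhigh he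
        _ = C ^ e * (k + r) ^ e := Real.mul_rpow hCpos.le hkr.le
        _ ≤ max (c ^ e) (C ^ e) * (k + r) ^ e :=
            mul_le_mul_of_nonneg_right (le_max_right _ _) (Real.rpow_nonneg hkr.le _)
  · constructor
    · calc min (c ^ e) (C ^ e) * (k + r) ^ e ≤ C ^ e * (k + r) ^ e :=
            mul_le_mul_of_nonneg_right (min_le_right _ _) (Real.rpow_nonneg hkr.le _)
        _ = (C * (k + r)) ^ e := (Real.mul_rpow hCpos.le hkr.le).symm
        _ ≤ (k + h) ^ e := Real.rpow_le_rpow_of_nonpos hkh hhigh he.le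
    · calc (k + h) ^ e ≤ (c * (k + r)) ^ e := Real.rpow_le_rpow_of_nonpos hpos hlow he.le
        _ = c ^ e * (k + r) ^ e := Real.mul_rpow hc.le hkr.le
        _ ≤ max (c ^ e) (C ^ e) * (k + r) ^ e :=
            mul_le_mul_of_nonneg_right (le_max_left _ _) (Real.rpow_nonneg hkr.le _)


noncomputable def eIso' (n : ℕ) : StrongDual ℝ (EuclideanSpace ℝ (Fin n)) ≃L[ℝ] EuclideanSpace ℝ (Fin n) :=
  (toDual ℝ (EuclideanSpace ℝ (Fin n))).symm.toContinuousLinearEquiv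

section aux
variable {n : ℕ}
local notation "E" => EuclideanSpace ℝ (Fin n)
variable {H : EuclideanSpace ℝ (Fin n) → ℝ}

lemma mem_nhds_ne {ξ : EuclideanSpace ℝ (Fin n)} (hξ : ξ ≠ 0) :
    ({(0 : EuclideanSpace ℝ (Fin n))}ᶜ : Set _) ∈ nhds ξ :=
  isOpen_compl_singleton.mem_nhds (by simpa)

lemma aux_diffH (hH2 : ContDiffOn ℝ 2 H {(0 : EuclideanSpace ℝ (Fin n))}ᶜ)
    {ξ : EuclideanSpace ℝ (Fin n)} (hξ : ξ ≠ 0) : DifferentiableAt ℝ H ξ :=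
  (hH2.contDiffAt (mem_nhds_ne hξ)).differentiableAt (by norm_num)

lemma aux_difffH (hH2 : ContDiffOn ℝ 2 H {(0 : EuclideanSpace ℝ (Fin n))}ᶜ)
    {ξ : EuclideanSpace ℝ (Fin n)} (hξ : ξ ≠ 0) : DifferentiableAt ℝ (fderiv ℝ H) ξ :=
  ((hH2.contDiffAt (mem_nhds_ne hξ)).fderiv_right (m := 1) (by norm_num)).differentiableAt (by norm_num)

lemma aux_grad_eq : gradient H = ⇑(eIso' n) ∘ fderiv ℝ H := rfl

lemma aux_diffG (hH2 : ContDiffOn ℝ 2 H {(0 : EuclideanSpace ℝ (Fin n))}ᶜ)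
    {ξ : EuclideanSpace ℝ (Fin n)} (hξ : ξ ≠ 0) : DifferentiableAt ℝ (gradient H) ξ := by
  rw [aux_grad_eq]
  exact (eIso' n).differentiableAt.comp ξ (aux_difffH hH2 hξ)

lemma aux_inner_grad (x w : EuclideanSpace ℝ (Fin n)) :
    (inner ℝ (gradient H x) w : ℝ) = fderiv ℝ H x w :=
  toDual_symm_apply

lemma aux_inner_A (ξ v w : EuclideanSpace ℝ (Fin n)) :
    (inner ℝ (fderiv ℝ (gradient H) ξ v) w : ℝ) = fderiv ℝ (fderiv ℝ H) ξ v w := by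
  rw [aux_grad_eq, ContinuousLinearEquiv.comp_fderiv]
  exact toDual_symm_apply

lemma aux_symm (hH2 : ContDiffOn ℝ 2 H {(0 : EuclideanSpace ℝ (Fin n))}ᶜ)
    {ξ : EuclideanSpace ℝ (Fin n)} (hξ : ξ ≠ 0) (v w : EuclideanSpace ℝ (Fin n)) :
    (inner ℝ (fderiv ℝ (gradient H) ξ v) w : ℝ) = (inner ℝ (fderiv ℝ (gradient H) ξ w) v : ℝ) := by
  rw [aux_inner_A, aux_inner_A]
  have hf : ∀ᶠ y in nhds ξ, HasFDerivAt H (fderiv ℝ H y) y := by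
    filter_upwards [mem_nhds_ne hξ] with y hy
    exact (aux_diffH hH2 (by simpa using hy)).hasFDerivAt
  exact second_derivative_symmetric_of_eventually hf (aux_difffH hH2 hξ).hasFDerivAt v w



variable (hH2 : ContDiffOn ℝ 2 H {(0 : EuclideanSpace ℝ (Fin n))}ᶜ)
variable (hHhomog : ∀ t : ℝ, 0 < t → ∀ ξ : EuclideanSpace ℝ (Fin n), ξ ≠ 0 →
      H (t • ξ) = t * H ξ)
include hH2 hHhomog

lemma aux_fderiv_homog {t : ℝ} (ht : 0 < t) {ξ : EuclideanSpace ℝ (Fin n)} (hξ : ξ ≠ 0) :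
    fderiv ℝ H (t • ξ) = fderiv ℝ H ξ := by
  have htξ : t • ξ ≠ 0 := smul_ne_zero ht.ne' hξ
  have hsc : HasFDerivAt (fun x : EuclideanSpace ℝ (Fin n) => t • x)
      (t • ContinuousLinearMap.id ℝ (EuclideanSpace ℝ (Fin n))) ξ :=
    (hasFDerivAt_id ξ).const_smul t
  have h1 : HasFDerivAt (fun x => H (t • x))
      ((fderiv ℝ H (t • ξ)).comp (t • ContinuousLinearMap.id ℝ (EuclideanSpace ℝ (Fin n)))) ξ :=
    (aux_diffH hH2 htξ).hasFDerivAt.comp ξ hsc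
  have h2 : HasFDerivAt (fun x => t * H x) (t • fderiv ℝ H ξ) ξ :=
    (aux_diffH hH2 hξ).hasFDerivAt.const_mul t
  have heq : (fun x => H (t • x)) =ᶠ[nhds ξ] (fun x => t * H x) := by
    filter_upwards [mem_nhds_ne hξ] with x hx
    exact hHhomog t ht x (by simpa using hx)
  have h3 := h2.congr_of_eventuallyEq heq
  have h4 := h1.unique h3
  have hcomp : (fderiv ℝ H (t • ξ)).comp (t • ContinuousLinearMap.id ℝ (EuclideanSpace ℝ (Fin n)))
      = t • fderiv ℝ H (t • ξ) := by
    ext y; simp [mul_comm]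
  rw [hcomp] at h4
  exact smul_right_injective _ ht.ne' h4

lemma aux_grad_homog {t : ℝ} (ht : 0 < t) {ξ : EuclideanSpace ℝ (Fin n)} (hξ : ξ ≠ 0) :
    gradient H (t • ξ) = gradient H ξ := by
  show (toDual ℝ _).symm _ = (toDual ℝ _).symm _
  rw [aux_fderiv_homog hH2 hHhomog ht hξ]

lemma aux_A_homog {t : ℝ} (ht : 0 < t) {ξ : EuclideanSpace ℝ (Fin n)} (hξ : ξ ≠ 0) :
    fderiv ℝ (gradient H) (t • ξ) = t⁻¹ • fderiv ℝ (gradient H) ξ := by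
  have htξ : t • ξ ≠ 0 := smul_ne_zero ht.ne' hξ
  have hsc : HasFDerivAt (fun x : EuclideanSpace ℝ (Fin n) => t • x)
      (t • ContinuousLinearMap.id ℝ (EuclideanSpace ℝ (Fin n))) ξ :=
    (hasFDerivAt_id ξ).const_smul t
  have h1 : HasFDerivAt (fun x => gradient H (t • x))
      ((fderiv ℝ (gradient H) (t • ξ)).comp
        (t • ContinuousLinearMap.id ℝ (EuclideanSpace ℝ (Fin n)))) ξ :=
    (aux_diffG hH2 htξ).hasFDerivAt.comp ξ hsc
  have heq : (fun x => gradient H (t • x)) =ᶠ[nhds ξ] gradient H := by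
    filter_upwards [mem_nhds_ne hξ] with x hx
    exact aux_grad_homog hH2 hHhomog ht (by simpa using hx)
  have h3 := (aux_diffG hH2 hξ).hasFDerivAt.congr_of_eventuallyEq heq
  have h4 := h1.unique h3
  have hcomp : (fderiv ℝ (gradient H) (t • ξ)).comp
      (t • ContinuousLinearMap.id ℝ (EuclideanSpace ℝ (Fin n)))
      = t • fderiv ℝ (gradient H) (t • ξ) := by
    ext y i; simp
  rw [hcomp] at h4
  rw [eq_inv_smul_iff₀ ht.ne']; exact h4

lemma aux_euler1 {ξ : EuclideanSpace ℝ (Fin n)} (hξ : ξ ≠ 0) :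
    fderiv ℝ H ξ ξ = H ξ := by
  have hc : HasDerivAt (fun u : ℝ => u • ξ) ξ 1 := by
    simpa using (hasDerivAt_id (1:ℝ)).smul_const ξ
  have h0 : HasFDerivAt H (fderiv ℝ H ξ) ((1:ℝ) • ξ) := by
    rw [one_smul]; exact (aux_diffH hH2 hξ).hasFDerivAt
  have h1 : HasDerivAt (fun u : ℝ => H (u • ξ)) (fderiv ℝ H ξ ξ) 1 :=
    h0.comp_hasDerivAt 1 hc
  have h2 : HasDerivAt (fun u : ℝ => u * H ξ) (H ξ) 1 := hasDerivAt_mul_const (H ξ)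
  have heq : (fun u : ℝ => H (u • ξ)) =ᶠ[nhds 1] (fun u : ℝ => u * H ξ) := by
    filter_upwards [eventually_gt_nhds zero_lt_one] with u hu
    exact hHhomog u hu ξ hξ
  exact h1.unique (h2.congr_of_eventuallyEq heq)

lemma aux_euler2 {ξ : EuclideanSpace ℝ (Fin n)} (hξ : ξ ≠ 0) :
    fderiv ℝ (gradient H) ξ ξ = 0 := by
  have hc : HasDerivAt (fun u : ℝ => u • ξ) ξ 1 := by
    simpa using (hasDerivAt_id (1:ℝ)).smul_const ξ
  have h0 : HasFDerivAt (gradient H) (fderiv ℝ (gradient H) ξ) ((1:ℝ) • ξ) := by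
    rw [one_smul]; exact (aux_diffG hH2 hξ).hasFDerivAt
  have h1 : HasDerivAt (fun u : ℝ => gradient H (u • ξ)) (fderiv ℝ (gradient H) ξ ξ) 1 := by
    have h := h0.comp_hasDerivAt 1 hc; exact h
  have h2 : HasDerivAt (fun _ : ℝ => gradient H ξ) 0 1 := hasDerivAt_const _ _
  have heq : (fun u : ℝ => gradient H (u • ξ)) =ᶠ[nhds 1]
      (fun _ : ℝ => gradient H ξ) := by
    filter_upwards [eventually_gt_nhds zero_lt_one] with u hu
    exact aux_grad_homog hH2 hHhomog hu hξ
  exact h1.unique (h2.congr_of_eventuallyEq heq)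
end aux

set_option maxHeartbeats 2000000 in
/-- Structural ellipticity bounds: under the assumptions (i)–(vi) there exist
`C̄₁, C̄₂ > 0` such that the matrix
`M(ξ) = B''(H(ξ)) ∇H(ξ) ⊗ ∇H(ξ) + B'(H(ξ)) D²H(ξ)` satisfies
`⟨M(ξ) v, v⟩ ≥ C̄₁ (k+|ξ|)^{p-2} |v|²` and
`|⟨M(ξ) v, w⟩| ≤ C̄₂ (k+|ξ|)^{p-2} |v| |w|` for all `ξ ≠ 0` and `v, w`. -/
theorem structural_ellipticity_bounds {n : ℕ}
    (p k gam Gam lam : ℝ) (hp : 1 < p) (hk : k ∈ Set.Icc (0:ℝ) 1)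
    (hgam : 0 < gam) (hgamGam : gam ≤ Gam) (hlam : 0 < lam)
    (B : ℝ → ℝ)
    (hB : ContDiffOn ℝ 2 B (Set.Ioi (0:ℝ)))
    (hB'bound : ∀ t : ℝ, 0 < t →
      gam * (k + t) ^ (p - 2) * t ≤ deriv B t ∧
      deriv B t ≤ Gam * (k + t) ^ (p - 2) * t)
    (hB''bound : ∀ t : ℝ, 0 < t →
      gam * (k + t) ^ (p - 2) ≤ deriv (deriv B) t ∧
      deriv (deriv B) t ≤ Gam * (k + t) ^ (p - 2))
    (H : EuclideanSpace ℝ (Fin n) → ℝ)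
    (hH2 : ContDiffOn ℝ 2 H {(0 : EuclideanSpace ℝ (Fin n))}ᶜ)
    (hHeven : ∀ ξ, H (-ξ) = H ξ)
    (hHpos : ∀ ξ : EuclideanSpace ℝ (Fin n), ξ ≠ 0 → 0 < H ξ)
    (hHhomog : ∀ t : ℝ, 0 < t → ∀ ξ : EuclideanSpace ℝ (Fin n), ξ ≠ 0 →
      H (t • ξ) = t * H ξ)
    (hHell : ∀ ξ : EuclideanSpace ℝ (Fin n), H ξ = 1 →
      ∀ v : EuclideanSpace ℝ (Fin n), (inner ℝ (gradient H ξ) v : ℝ) = 0 →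
        lam * ‖v‖ ^ 2 ≤ (inner ℝ (fderiv ℝ (gradient H) ξ v) v : ℝ))
    (M : EuclideanSpace ℝ (Fin n) → EuclideanSpace ℝ (Fin n) →
      EuclideanSpace ℝ (Fin n) → ℝ)
    (hM : ∀ ξ v w : EuclideanSpace ℝ (Fin n), M ξ v w =
      deriv (deriv B) (H ξ) *
        ((inner ℝ (gradient H ξ) v : ℝ) * (inner ℝ (gradient H ξ) w : ℝ)) +
      deriv B (H ξ) * (inner ℝ (fderiv ℝ (gradient H) ξ v) w : ℝ)) :
    ∃ C₁ C₂ : ℝ, 0 < C₁ ∧ 0 < C₂ ∧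
      ∀ ξ : EuclideanSpace ℝ (Fin n), ξ ≠ 0 →
        (∀ v : EuclideanSpace ℝ (Fin n),
          C₁ * (k + ‖ξ‖) ^ (p - 2) * ‖v‖ ^ 2 ≤ M ξ v v) ∧
        (∀ v w : EuclideanSpace ℝ (Fin n),
          |M ξ v w| ≤ C₂ * (k + ‖ξ‖) ^ (p - 2) * ‖v‖ * ‖w‖) := by
  obtain ⟨hk0, hk1⟩ := hk
  rcases Nat.eq_zero_or_pos n with hn | hn
  · refine ⟨1, 1, one_pos, one_pos, fun ξ hξ => absurd ?_ hξ⟩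
    subst hn
    exact Subsingleton.elim ξ 0
  haveI : Nonempty (Fin n) := ⟨⟨0, hn⟩⟩
  haveI : Nontrivial (EuclideanSpace ℝ (Fin n)) := inferInstance
  -- compactness bounds on the unit sphere
  have hmain : ∃ m₁ m₂ cg cA : ℝ, 0 < m₁ ∧ m₁ ≤ m₂ ∧ 0 ≤ cg ∧ 0 ≤ cA ∧
      ∀ ξ : EuclideanSpace ℝ (Fin n), ξ ≠ 0 →
        m₁ * ‖ξ‖ ≤ H ξ ∧ H ξ ≤ m₂ * ‖ξ‖ ∧ ‖gradient H ξ‖ ≤ cg ∧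
        ‖fderiv ℝ (gradient H) ξ‖ ≤ cA / ‖ξ‖ := by
    set U : Set (EuclideanSpace ℝ (Fin n)) := {0}ᶜ with hU_def
    have hUopen : IsOpen U := isOpen_compl_singleton
    have hSsub : Metric.sphere (0 : EuclideanSpace ℝ (Fin n)) 1 ⊆ U := by
      intro x hx
      have hx1 : ‖x‖ = 1 := mem_sphere_zero_iff_norm.mp hx
      simp only [hU_def, Set.mem_compl_iff, Set.mem_singleton_iff]
      intro h0
      rw [h0] at hx1
      simp at hx1
    have hSne : (Metric.sphere (0 : EuclideanSpace ℝ (Fin n)) 1).Nonempty :=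
      NormedSpace.sphere_nonempty.mpr zero_le_one
    have hScomp := isCompact_sphere (0 : EuclideanSpace ℝ (Fin n)) 1
    have hHcont : ContinuousOn H U := hH2.continuousOn
    have hfcont : ContinuousOn (fderiv ℝ H) U :=
      hH2.continuousOn_fderiv_of_isOpen hUopen (by norm_num)
    have hGcont : ContinuousOn (gradient H) U := by
      rw [aux_grad_eq]
      exact (eIso' n).continuous.comp_continuousOn hfcont
    have hGcd : ContDiffOn ℝ 1 (gradient H) U := by
      rw [aux_grad_eq]
      exact ((eIso' n).toContinuousLinearMap.contDiff).comp_contDiffOn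
        (hH2.fderiv_of_isOpen hUopen (by norm_num))
    have hAcont : ContinuousOn (fderiv ℝ (gradient H)) U :=
      hGcd.continuousOn_fderiv_of_isOpen hUopen le_rfl
    obtain ⟨x₁, hx₁, hm₁'⟩ := hScomp.exists_isMinOn hSne (hHcont.mono hSsub)
    obtain ⟨x₂, hx₂, hm₂'⟩ := hScomp.exists_isMaxOn hSne (hHcont.mono hSsub)
    obtain ⟨x₃, hx₃, hc₃'⟩ := hScomp.exists_isMaxOn hSne ((hGcont.mono hSsub).norm)
    obtain ⟨x₄, hx₄, hc₄'⟩ := hScomp.exists_isMaxOn hSne ((hAcont.mono hSsub).norm)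
    have hm₁ := isMinOn_iff.mp hm₁'
    have hm₂ := isMaxOn_iff.mp hm₂'
    have hc₃ := isMaxOn_iff.mp hc₃'
    have hc₄ := isMaxOn_iff.mp hc₄'
    have hx₁ne : x₁ ≠ 0 := by simpa [hU_def] using hSsub hx₁
    refine ⟨H x₁, H x₂, ‖gradient H x₃‖, ‖fderiv ℝ (gradient H) x₄‖,
      hHpos x₁ hx₁ne, hm₁ x₂ hx₂, norm_nonneg _, norm_nonneg _, ?_⟩
    intro ξ hξ
    have hr : 0 < ‖ξ‖ := norm_pos_iff.mpr hξ
    set x := ‖ξ‖⁻¹ • ξ with hx_def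
    have hxne : x ≠ 0 := smul_ne_zero (inv_ne_zero hr.ne') hξ
    have hxS : x ∈ Metric.sphere (0 : EuclideanSpace ℝ (Fin n)) 1 := by
      rw [mem_sphere_zero_iff_norm, hx_def, norm_smul]
      simp [abs_of_pos (inv_pos.mpr hr), inv_mul_cancel₀ hr.ne']
    have hsm : ‖ξ‖ • x = ξ := smul_inv_smul₀ hr.ne' ξ
    have h1 : H ξ = ‖ξ‖ * H x := by
      calc H ξ = H (‖ξ‖ • x) := by rw [hsm]
        _ = ‖ξ‖ * H x := hHhomog _ hr x hxne
    have h2 : gradient H ξ = gradient H x := by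
      have := aux_grad_homog hH2 hHhomog hr hxne
      rwa [hsm] at this
    have h3 : fderiv ℝ (gradient H) ξ = ‖ξ‖⁻¹ • fderiv ℝ (gradient H) x := by
      have := aux_A_homog hH2 hHhomog hr hxne
      rwa [hsm] at this
    refine ⟨?_, ?_, ?_, ?_⟩
    · rw [h1, mul_comm ‖ξ‖ (H x)]
      exact mul_le_mul_of_nonneg_right (hm₁ x hxS) hr.le
    · rw [h1, mul_comm (H x₂) ‖ξ‖]
      exact mul_le_mul_of_nonneg_left (hm₂ x hxS) hr.le
    · rw [h2]; exact hc₃ x hxS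
    · rw [h3, norm_smul]
      rw [norm_inv, norm_norm, div_eq_inv_mul]
      exact mul_le_mul_of_nonneg_left (hc₄ x hxS) (by positivity)
  obtain ⟨m₁, m₂, cg, cA, hm₁pos, hm₁₂, hcg0, hcA0, hkey⟩ := hmain
  -- transfer of the ellipticity assumption
  have hell : ∀ ξ : EuclideanSpace ℝ (Fin n), ξ ≠ 0 →
      ∀ u : EuclideanSpace ℝ (Fin n), (inner ℝ (gradient H ξ) u : ℝ) = 0 →
      lam * ‖u‖ ^ 2 ≤ H ξ * (inner ℝ (fderiv ℝ (gradient H) ξ u) u : ℝ) := by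
    intro ξ hξ u hu
    have hh : 0 < H ξ := hHpos ξ hξ
    have hinv : (0:ℝ) < (H ξ)⁻¹ := inv_pos.mpr hh
    have hyne : (H ξ)⁻¹ • ξ ≠ 0 := smul_ne_zero (inv_ne_zero hh.ne') hξ
    have hy1 : H ((H ξ)⁻¹ • ξ) = 1 := by
      rw [hHhomog _ hinv ξ hξ]
      exact inv_mul_cancel₀ hh.ne'
    have hgy : gradient H ((H ξ)⁻¹ • ξ) = gradient H ξ :=
      aux_grad_homog hH2 hHhomog hinv hξ
    have hAy : fderiv ℝ (gradient H) ((H ξ)⁻¹ • ξ) = H ξ • fderiv ℝ (gradient H) ξ := by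
      rw [aux_A_homog hH2 hHhomog hinv hξ, inv_inv]
    have h := hHell ((H ξ)⁻¹ • ξ) hy1 u (by rw [hgy]; exact hu)
    rw [hAy] at h
    rwa [ContinuousLinearMap.smul_apply, real_inner_smul_left] at h
  -- constants
  set c : ℝ := min m₁ 1 with hc_def
  set Cb : ℝ := max m₂ 1 with hCb_def
  have hcpos : 0 < c := lt_min hm₁pos one_pos
  have hc1 : c ≤ 1 := min_le_right _ _
  have hCb1 : (1:ℝ) ≤ Cb := le_max_right _ _
  set κ₁ : ℝ := min (c ^ (p-2)) (Cb ^ (p-2)) with hκ₁_def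
  set κ₂ : ℝ := max (c ^ (p-2)) (Cb ^ (p-2)) with hκ₂_def
  have hκ₁pos : 0 < κ₁ :=
    lt_min (Real.rpow_pos_of_pos hcpos _) (Real.rpow_pos_of_pos (lt_of_lt_of_le one_pos hCb1) _)
  have hκ₂pos : 0 < κ₂ := lt_of_lt_of_le hκ₁pos (min_le_max)
  set μ : ℝ := min lam 1 with hμ_def
  set ν : ℝ := min 1 (m₁^2) with hν_def
  have hμpos : 0 < μ := lt_min hlam one_pos
  have hνpos : 0 < ν := lt_min one_pos (pow_pos hm₁pos 2)
  have hGam0 : (0:ℝ) < Gam := lt_of_lt_of_le hgam hgamGam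
  have hm₂0 : 0 < m₂ := lt_of_lt_of_le hm₁pos hm₁₂
  refine ⟨gam * κ₁ * (μ * ν / 2), Gam * κ₂ * (cg^2 + m₂ * cA + 1),
    mul_pos (mul_pos hgam hκ₁pos)
      (div_pos (mul_pos hμpos hνpos) two_pos),
    mul_pos (mul_pos hGam0 hκ₂pos)
      (by linarith [sq_nonneg cg, mul_nonneg hm₂0.le hcA0]), ?_⟩
  intro ξ hξ
  have hr : 0 < ‖ξ‖ := norm_pos_iff.mpr hξ
  have hh : 0 < H ξ := hHpos ξ hξ
  obtain ⟨hHl, hHu, hgn, hAn⟩ := hkey ξ hξ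
  have hsand := rpow_sandwich (e := p - 2) hcpos hc1 hCb1 hk0 hr
    ((mul_le_mul_of_nonneg_right (min_le_left m₁ 1) hr.le).trans hHl)
    (hHu.trans (mul_le_mul_of_nonneg_right (le_max_left m₂ 1) hr.le))
  obtain ⟨hsand1, hsand2⟩ := hsand
  have hQpos : 0 < (k + ‖ξ‖) ^ (p-2) := Real.rpow_pos_of_pos (by linarith) _
  have hPpos : 0 < (k + H ξ) ^ (p-2) := Real.rpow_pos_of_pos (by linarith) _
  obtain ⟨hB'l, hB'u⟩ := hB'bound (H ξ) hh
  obtain ⟨hB''l, hB''u⟩ := hB''bound (H ξ) hh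
  have hB''pos : 0 < deriv (deriv B) (H ξ) := lt_of_lt_of_le (by positivity) hB''l
  have hB'pos : 0 < deriv B (H ξ) := lt_of_lt_of_le (by positivity) hB'l
  constructor
  · -- lower bound
    intro v
    set a : ℝ := (inner ℝ (gradient H ξ) v : ℝ) with ha_def
    have hgξ : (inner ℝ (gradient H ξ) ξ : ℝ) = H ξ := by
      rw [aux_inner_grad]
      exact aux_euler1 hH2 hHhomog hξ
    set u : EuclideanSpace ℝ (Fin n) := v - (a / H ξ) • ξ with hu_def
    have hv_eq : v = u + (a / H ξ) • ξ := by rw [hu_def]; abel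
    have hgu : (inner ℝ (gradient H ξ) u : ℝ) = 0 := by
      rw [hu_def, inner_sub_right, real_inner_smul_right, hgξ, ← ha_def]
      field_simp
      ring
    have hAξ : fderiv ℝ (gradient H) ξ ξ = 0 := aux_euler2 hH2 hHhomog hξ
    have hAvu : fderiv ℝ (gradient H) ξ v = fderiv ℝ (gradient H) ξ u := by
      rw [hu_def, map_sub, map_smul, hAξ, smul_zero, sub_zero]
    have hAuξ : (inner ℝ (fderiv ℝ (gradient H) ξ u) ξ : ℝ) = 0 := by
      rw [aux_symm hH2 hξ u ξ, hAξ]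
      exact inner_zero_left _
    have hAvv : (inner ℝ (fderiv ℝ (gradient H) ξ v) v : ℝ)
        = (inner ℝ (fderiv ℝ (gradient H) ξ u) u : ℝ) := by
      rw [hAvu]
      conv_lhs => rw [hv_eq]
      rw [inner_add_right, real_inner_smul_right, hAuξ]
      ring
    have hquad := hell ξ hξ u hgu
    have hAuu : 0 ≤ (inner ℝ (fderiv ℝ (gradient H) ξ u) u : ℝ) := by
      have h0 : H ξ * 0 ≤ H ξ * (inner ℝ (fderiv ℝ (gradient H) ξ u) u : ℝ) := by
        rw [mul_zero]
        exact le_trans (mul_nonneg hlam.le (sq_nonneg ‖u‖)) hquad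
      exact le_of_mul_le_mul_left h0 hh
    -- norm control
    have hvnorm : m₁ * ‖v‖ ≤ m₁ * ‖u‖ + |a| := by
      have h5 : ‖v‖ ≤ ‖u‖ + |a| / H ξ * ‖ξ‖ := by
        conv_lhs => rw [hv_eq]
        refine (norm_add_le _ _).trans ?_
        rw [norm_smul, Real.norm_eq_abs, abs_div, abs_of_pos hh]
      have h6 : m₁ * (|a| / H ξ * ‖ξ‖) ≤ |a| := by
        rw [div_mul_eq_mul_div, mul_div_assoc', div_le_iff₀ hh]
        have h6a := mul_le_mul_of_nonneg_left hHl (abs_nonneg a)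
        linarith
      have h7 := mul_le_mul_of_nonneg_left h5 hm₁pos.le
      have h8 : m₁ * (‖u‖ + |a| / H ξ * ‖ξ‖) = m₁ * ‖u‖ + m₁ * (|a| / H ξ * ‖ξ‖) := by
        ring
      linarith
    have hquad2 : μ * ν / 2 * ‖v‖ ^ 2 ≤ a ^ 2 + lam * ‖u‖ ^ 2 := by
      have hsq : m₁^2 * ‖v‖^2 ≤ 2 * m₁^2 * ‖u‖^2 + 2 * a^2 := by
        have w1 : 0 ≤ m₁ * ‖v‖ := mul_nonneg hm₁pos.le (norm_nonneg v)
        have w2 := mul_self_le_mul_self w1 hvnorm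
        have w3 := two_mul_le_add_sq (m₁ * ‖u‖) |a|
        calc m₁^2 * ‖v‖^2 = (m₁ * ‖v‖) * (m₁ * ‖v‖) := by ring
          _ ≤ (m₁ * ‖u‖ + |a|) * (m₁ * ‖u‖ + |a|) := w2
          _ = (m₁ * ‖u‖)^2 + 2 * (m₁ * ‖u‖) * |a| + |a|^2 := by ring
          _ ≤ (m₁ * ‖u‖)^2 + ((m₁ * ‖u‖)^2 + |a|^2) + |a|^2 := by linarith
          _ = 2 * m₁^2 * ‖u‖^2 + 2 * a^2 := by rw [← sq_abs a]; ring
      have hμlam : μ ≤ lam := min_le_left _ _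
      have hμ1 : μ ≤ 1 := min_le_right _ _
      have hν1 : ν ≤ 1 := min_le_left _ _
      have hνm : ν ≤ m₁^2 := min_le_right _ _
      have hm2 : (0:ℝ) < m₁^2 := pow_pos hm₁pos 2
      have e2 : μ * ν * (m₁^2 * ‖v‖^2) ≤ μ * ν * (2 * m₁^2 * ‖u‖^2 + 2 * a^2) :=
        mul_le_mul_of_nonneg_left hsq (mul_nonneg hμpos.le hνpos.le)
      have hint2 : μ * ν ≤ lam :=
        le_trans (mul_le_mul hμlam hν1 hνpos.le hlam.le) (by rw [mul_one])
      have hint3 : μ * ν ≤ m₁^2 :=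
        le_trans (mul_le_mul hμ1 le_rfl hνpos.le one_pos.le) (by rw [one_mul]; exact hνm)
      have e3 : m₁^2 * (μ * ν * ‖u‖^2) ≤ m₁^2 * (lam * ‖u‖^2) :=
        mul_le_mul_of_nonneg_left
          (mul_le_mul_of_nonneg_right hint2 (sq_nonneg ‖u‖)) hm2.le
      have e4 : μ * ν * a^2 ≤ m₁^2 * a^2 :=
        mul_le_mul_of_nonneg_right hint3 (sq_nonneg a)
      have e5 : m₁^2 * (μ * ν / 2 * ‖v‖^2) ≤ m₁^2 * (a^2 + lam * ‖u‖^2) := by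
        linarith [e2, e3, e4]
      exact le_of_mul_le_mul_left e5 hm2
    have hstep1 : gam * (k + H ξ) ^ (p-2) * (a ^ 2 + lam * ‖u‖ ^ 2) ≤ M ξ v v := by
      rw [hM ξ v v, ← ha_def, hAvv]
      have t1 : gam * (k + H ξ) ^ (p-2) * a ^ 2 ≤ deriv (deriv B) (H ξ) * (a * a) := by
        have h12 := mul_le_mul_of_nonneg_right hB''l (sq_nonneg a)
        linarith [h12]
      have t2 : gam * (k + H ξ) ^ (p-2) * (lam * ‖u‖ ^ 2)
          ≤ deriv B (H ξ) * (inner ℝ (fderiv ℝ (gradient H) ξ u) u : ℝ) := by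
        calc gam * (k + H ξ) ^ (p-2) * (lam * ‖u‖ ^ 2)
            ≤ gam * (k + H ξ) ^ (p-2) * (H ξ * (inner ℝ (fderiv ℝ (gradient H) ξ u) u : ℝ)) :=
              mul_le_mul_of_nonneg_left hquad (mul_pos hgam hPpos).le
          _ = gam * (k + H ξ) ^ (p-2) * H ξ * (inner ℝ (fderiv ℝ (gradient H) ξ u) u : ℝ) := by
              ring
          _ ≤ deriv B (H ξ) * (inner ℝ (fderiv ℝ (gradient H) ξ u) u : ℝ) :=
              mul_le_mul_of_nonneg_right hB'l hAuu
      calc gam * (k + H ξ) ^ (p-2) * (a ^ 2 + lam * ‖u‖ ^ 2)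
          = gam * (k + H ξ) ^ (p-2) * a ^ 2 + gam * (k + H ξ) ^ (p-2) * (lam * ‖u‖ ^ 2) := by
            ring
        _ ≤ _ := add_le_add t1 t2
    calc gam * κ₁ * (μ * ν / 2) * (k + ‖ξ‖) ^ (p-2) * ‖v‖ ^ 2
        = gam * (μ * ν / 2 * ‖v‖ ^ 2) * (κ₁ * (k + ‖ξ‖) ^ (p-2)) := by ring
      _ ≤ gam * (a ^ 2 + lam * ‖u‖ ^ 2) * (k + H ξ) ^ (p-2) := by
          have hnn : 0 ≤ a ^ 2 + lam * ‖u‖ ^ 2 :=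
            add_nonneg (sq_nonneg a) (mul_nonneg hlam.le (sq_nonneg _))
          have h9 : 0 ≤ κ₁ * (k + ‖ξ‖) ^ (p-2) := (mul_pos hκ₁pos hQpos).le
          exact mul_le_mul (mul_le_mul_of_nonneg_left hquad2 hgam.le) hsand1 h9
            (mul_nonneg hgam.le hnn)
      _ = gam * (k + H ξ) ^ (p-2) * (a ^ 2 + lam * ‖u‖ ^ 2) := by ring
      _ ≤ M ξ v v := hstep1
  · -- upper bound
    intro v w
    have hgv : |(inner ℝ (gradient H ξ) v : ℝ)| ≤ cg * ‖v‖ :=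
      (abs_real_inner_le_norm _ _).trans
        (mul_le_mul_of_nonneg_right hgn (norm_nonneg v))
    have hgw : |(inner ℝ (gradient H ξ) w : ℝ)| ≤ cg * ‖w‖ :=
      (abs_real_inner_le_norm _ _).trans
        (mul_le_mul_of_nonneg_right hgn (norm_nonneg w))
    have hAvw : |(inner ℝ (fderiv ℝ (gradient H) ξ v) w : ℝ)| ≤ cA / ‖ξ‖ * ‖v‖ * ‖w‖ := by
      refine (abs_real_inner_le_norm _ _).trans ?_
      have h10 : ‖fderiv ℝ (gradient H) ξ v‖ ≤ cA / ‖ξ‖ * ‖v‖ :=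
        ((fderiv ℝ (gradient H) ξ).le_opNorm v).trans
          (mul_le_mul_of_nonneg_right hAn (norm_nonneg v))
      exact mul_le_mul_of_nonneg_right h10 (norm_nonneg w)
    have hB''2 : deriv (deriv B) (H ξ) ≤ Gam * (κ₂ * (k + ‖ξ‖) ^ (p-2)) :=
      hB''u.trans (mul_le_mul_of_nonneg_left hsand2 hGam0.le)
    have hB'2 : deriv B (H ξ) ≤ Gam * (κ₂ * (k + ‖ξ‖) ^ (p-2)) * (m₂ * ‖ξ‖) := by
      refine hB'u.trans ?_
      calc Gam * (k + H ξ) ^ (p-2) * H ξ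
          ≤ Gam * (κ₂ * (k + ‖ξ‖) ^ (p-2)) * H ξ :=
            mul_le_mul_of_nonneg_right
              (mul_le_mul_of_nonneg_left hsand2 hGam0.le) hh.le
        _ ≤ Gam * (κ₂ * (k + ‖ξ‖) ^ (p-2)) * (m₂ * ‖ξ‖) :=
            mul_le_mul_of_nonneg_left hHu
              (mul_nonneg hGam0.le (mul_pos hκ₂pos hQpos).le)
    rw [hM ξ v w]
    refine (abs_add_le _ _).trans ?_
    rw [abs_mul, abs_mul, abs_mul, abs_of_pos hB''pos, abs_of_pos hB'pos]
    calc deriv (deriv B) (H ξ) * (|(inner ℝ (gradient H ξ) v : ℝ)| * |(inner ℝ (gradient H ξ) w : ℝ)|)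
          + deriv B (H ξ) * |(inner ℝ (fderiv ℝ (gradient H) ξ v) w : ℝ)|
        ≤ Gam * (κ₂ * (k + ‖ξ‖) ^ (p-2)) * ((cg * ‖v‖) * (cg * ‖w‖))
          + Gam * (κ₂ * (k + ‖ξ‖) ^ (p-2)) * (m₂ * ‖ξ‖) * (cA / ‖ξ‖ * ‖v‖ * ‖w‖) := by
          refine add_le_add ?_ ?_
          · refine mul_le_mul hB''2 ?_ (mul_nonneg (abs_nonneg _) (abs_nonneg _))
              (mul_nonneg hGam0.le (mul_pos hκ₂pos hQpos).le)
            exact mul_le_mul hgv hgw (abs_nonneg _) (mul_nonneg hcg0 (norm_nonneg _))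
          · refine mul_le_mul hB'2 hAvw (abs_nonneg _) ?_
            exact mul_nonneg (mul_nonneg hGam0.le (mul_pos hκ₂pos hQpos).le)
              (mul_nonneg hm₂0.le hr.le)
        _ = Gam * κ₂ * (cg^2 + m₂ * cA) * ((k + ‖ξ‖) ^ (p-2) * (‖v‖ * ‖w‖)) := by
            field_simp
        _ ≤ Gam * κ₂ * (cg^2 + m₂ * cA + 1) * ((k + ‖ξ‖) ^ (p-2) * (‖v‖ * ‖w‖)) := by
            have h11 : 0 ≤ (k + ‖ξ‖) ^ (p-2) * (‖v‖ * ‖w‖) :=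
              mul_nonneg hQpos.le (mul_nonneg (norm_nonneg _) (norm_nonneg _))
            exact mul_le_mul_of_nonneg_right
              (mul_le_mul_of_nonneg_left (by linarith)
                (mul_nonneg hGam0.le hκ₂pos.le)) h11
        _ = Gam * κ₂ * (cg^2 + m₂ * cA + 1) * (k + ‖ξ‖) ^ (p-2) * ‖v‖ * ‖w‖ := by ring
end
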